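/- For every non-empty proper subset ω ⊂ {1,…,n+1}, the distance from the centre o of the permutahedron Πⁿ to the affine hyperplane spanned by the facet F_ω is at least r_n = (1/2)√(n(n+1)), with equality when |ω| ∈ {1, n}. -/

import Mathlib

open scoped BigOperators RealInnerProductSpace

set_option maxHeartbeats 1000000

/-- The value `∑_{j = n-|ω|+2}^{n+1} j` appearing in the equation of the facet `F_ω`. -/
def facetLevel (n k : ℕ) : ℝ := ∑ j ∈ Finset.Ioc (n + 1 - k) (n + 1), (j : ℝ)

/-- The centre `o = ((n+2)/2, …, (n+2)/2)` of the permutahedron, as a point of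
Euclidean space. -/
noncomputable def permCentre (n : ℕ) : EuclideanSpace ℝ (Fin (n + 1)) := WithLp.toLp 2 (fun _ => ((n : ℝ) + 2) / 2)

/-- The affine plane spanned by the facet `F_ω`: the intersection of the hyperplane
`∑_{i∈ω} t_i = ∑_{j=n-|ω|+2}^{n+1} j` with the hyperplane `∑ t_i = (n+1)(n+2)/2`
containing `Πⁿ`. -/
def facetPlane (n : ℕ) (ω : Finset (Fin (n + 1))) : Set (EuclideanSpace ℝ (Fin (n + 1))) :=
  {x | (∑ i ∈ ω, x i = facetLevel n ω.card) ∧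
    ∑ i, x i = ((n : ℝ) + 1) * ((n : ℝ) + 2) / 2}

/-- For every non-empty proper subset `ω ⊂ {1, …, n+1}`, the Euclidean distance from the
centre `o` of `Πⁿ` to the affine plane spanned by the facet `F_ω` is at least
`r_n = (1/2)√(n(n+1))`, with equality when `|ω| ∈ {1, n}`. -/
lemma sum_range_cast (k : ℕ) : ∑ i ∈ Finset.range k, (i : ℝ) = k * (k - 1) / 2 := by
  induction k with
  | zero => simp
  | succ m ih => rw [Finset.sum_range_succ, ih]; push_cast; ring

lemma facetLevel_eq (n k : ℕ) (hk : k ≤ n + 1) :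
    facetLevel n k = (k : ℝ) * (2 * n + 3 - k) / 2 := by
  unfold facetLevel
  have h0 : Finset.Ioc (n + 1 - k) (n + 1) = Finset.Ico (n + 1 - k + 1) (n + 1 + 1) := by
    ext x; simp [Nat.lt_succ_iff, Nat.succ_le_iff]
  rw [h0, Finset.sum_Ico_eq_sum_range]
  have h1 : n + 1 + 1 - (n + 1 - k + 1) = k := by omega
  rw [h1]
  have h2 : ∀ i ∈ Finset.range k, ((n + 1 - k + 1 + i : ℕ) : ℝ) = ((n:ℝ) + 2 - k) + i := by
    intro i _
    have : (((n + 1 - k : ℕ)) : ℝ) = (n : ℝ) + 1 - k := by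
      push_cast [Nat.cast_sub hk]; ring
    push_cast [this]; ring
  rw [Finset.sum_congr rfl h2, Finset.sum_add_distrib, Finset.sum_const, sum_range_cast]
  simp only [Finset.card_range, nsmul_eq_mul]
  ring

theorem permutahedron_facet_distance (n : ℕ) (hn : 1 ≤ n)
    (ω : Finset (Fin (n + 1))) (hω : ω.Nonempty) (hωprop : ω ≠ Finset.univ) :
    (1 / 2) * Real.sqrt ((n : ℝ) * ((n : ℝ) + 1)) ≤
      Metric.infDist (permCentre n) (facetPlane n ω) ∧
    ((ω.card = 1 ∨ ω.card = n) →
      Metric.infDist (permCentre n) (facetPlane n ω) =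
        (1 / 2) * Real.sqrt ((n : ℝ) * ((n : ℝ) + 1))) := by
  classical
  have hk1 : 1 ≤ ω.card := Finset.card_pos.mpr hω
  have hkn : ω.card ≤ n := by
    have h1 : ω.card ≤ n + 1 := by
      simpa using Finset.card_le_univ ω
    rcases h1.lt_or_eq with h | h
    · omega
    · exact absurd ((Finset.card_eq_iff_eq_univ ω).mp (by simpa using h)) hωprop
  set N : ℝ := (n : ℝ) with hNdef
  set K : ℝ := (ω.card : ℝ) with hKdef
  have hK1 : (1:ℝ) ≤ K := by rw [hKdef]; exact_mod_cast hk1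
  have hKN : K ≤ N := by rw [hKdef, hNdef]; exact_mod_cast hkn
  have hN1 : (1:ℝ) ≤ N := by rw [hNdef]; exact_mod_cast hn
  have hN1pos : (0:ℝ) < N + 1 := by linarith
  set Q : ℝ := K * (N + 1 - K) with hQdef
  have hQpos : 0 < Q := by nlinarith
  have hNQ : N ≤ Q := by nlinarith
  set c : ℝ := K / (N + 1) with hcdef
  set v : EuclideanSpace ℝ (Fin (n + 1)) := WithLp.toLp 2 (fun i => (if i ∈ ω then (1:ℝ) else 0) - c) with hvdef
  -- inner products against v
  have hinner : ∀ x : EuclideanSpace ℝ (Fin (n+1)),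
      ⟪v, x⟫ = (∑ i ∈ ω, x i) - c * ∑ i, x i := by
    intro x
    rw [PiLp.inner_apply]
    have hterm : ∀ i, ⟪v i, x i⟫ = (if i ∈ ω then x i else 0) - c * x i := by
      intro i
      by_cases h : i ∈ ω <;> simp [hvdef, h, real_inner_comm, PiLp.toLp_apply] <;> ring
    rw [Finset.sum_congr rfl (fun i _ => hterm i), Finset.sum_sub_distrib,
      Finset.sum_ite_mem, Finset.univ_inter, ← Finset.mul_sum]
  have hvω : ∑ i ∈ ω, v i = Q / (N+1) := by
    have h : ∀ i ∈ ω, v i = 1 - c := by intro i hi; simp [hvdef, hi, PiLp.toLp_apply]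
    rw [Finset.sum_congr rfl h, Finset.sum_const, nsmul_eq_mul, hcdef, hQdef]
    field_simp
    rw [← hKdef]
  have hvtot : ∑ i, v i = 0 := by
    have h : ∀ i, v i = (if i ∈ ω then (1:ℝ) else 0) - c := fun i => rfl
    rw [Finset.sum_congr rfl (fun i _ => h i), Finset.sum_sub_distrib,
      Finset.sum_ite_mem, Finset.univ_inter, Finset.sum_const, Finset.sum_const,
      Finset.card_univ]
    simp only [nsmul_eq_mul, mul_one, Fintype.card_fin, hcdef]
    push_cast
    field_simp
    rw [← hKdef, ← hNdef]; ring
  have hvv : ⟪v, v⟫ = Q / (N + 1) := by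
    rw [hinner v, hvω, hvtot, mul_zero, sub_zero]
  have hnv2 : ‖v‖^2 = Q/(N+1) := by
    rw [← real_inner_self_eq_norm_sq, hvv]
  have hnvpos : 0 < ‖v‖ := by
    have h2 : (0:ℝ) < ‖v‖^2 := by rw [hnv2]; positivity
    nlinarith [norm_nonneg v]
  -- centre sums
  have ho_ω : ∑ i ∈ ω, permCentre n i = K * (N+2)/2 := by
    simp only [permCentre, PiLp.toLp_apply, Finset.sum_const, nsmul_eq_mul]
    rw [← hKdef, ← hNdef]; ring
  have ho_tot : ∑ i, permCentre n i = (N+1)*(N+2)/2 := by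
    simp only [permCentre, PiLp.toLp_apply, Finset.sum_const, Finset.card_univ, Fintype.card_fin, nsmul_eq_mul]
    push_cast
    rw [← hNdef]; ring
  have hL : facetLevel n ω.card = K * (2*N + 3 - K)/2 := by
    rw [facetLevel_eq n ω.card (by omega), ← hKdef, ← hNdef]
  -- lower bound for every point of the plane
  have hlow : ∀ x ∈ facetPlane n ω, (Q/2) / ‖v‖ ≤ dist (permCentre n) x := by
    intro x hx
    obtain ⟨hx1, hx2⟩ := hx
    have hix : ⟪v, x - permCentre n⟫ = Q/2 := by
      rw [hinner]
      have e1 : ∑ i ∈ ω, (x - permCentre n) i = K * (2*N + 3 - K)/2 - K*(N+2)/2 := by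
        simp only [PiLp.sub_apply]
        rw [Finset.sum_sub_distrib, hx1, ho_ω, hL]
      have e2 : ∑ i, (x - permCentre n) i = 0 := by
        simp only [PiLp.sub_apply]
        rw [Finset.sum_sub_distrib, hx2, ho_tot]
        rw [← hNdef]; ring
      rw [e1, e2, hQdef]; ring
    have hcs := real_inner_le_norm v (x - permCentre n)
    rw [hix] at hcs
    rw [dist_eq_norm, ← norm_sub_rev, div_le_iff₀ hnvpos]
    nlinarith [norm_nonneg (x - permCentre n)]
  -- witness point
  set p : EuclideanSpace ℝ (Fin (n+1)) := permCentre n + ((N+1)/2) • v with hpdef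
  have hpapp : ∀ i, p i = permCentre n i + (N+1)/2 * v i := by
    intro i; simp [hpdef]
  have hpmem : p ∈ facetPlane n ω := by
    constructor
    · rw [Finset.sum_congr rfl (fun i _ => hpapp i), Finset.sum_add_distrib, ho_ω,
        ← Finset.mul_sum, hvω, hL]
      field_simp
      ring
    · rw [Finset.sum_congr rfl (fun i _ => hpapp i), Finset.sum_add_distrib, ho_tot,
        ← Finset.mul_sum, hvtot]
      rw [← hNdef]; ring
  have hdistp : dist (permCentre n) p = (Q/2)/‖v‖ := by
    rw [dist_eq_norm]
    have h : permCentre n - p = -(((N+1)/2) • v) := by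
      rw [hpdef]; abel
    rw [h, norm_neg, norm_smul, Real.norm_eq_abs, abs_of_pos (by linarith : (0:ℝ) < (N+1)/2),
      eq_div_iff hnvpos.ne']
    have hvv2 : ‖v‖ * ‖v‖ = Q/(N+1) := by rw [← pow_two]; exact hnv2
    rw [mul_assoc, hvv2]
    field_simp
  have hne : (facetPlane n ω).Nonempty := ⟨p, hpmem⟩
  have hinf : Metric.infDist (permCentre n) (facetPlane n ω) = (Q/2)/‖v‖ := by
    apply le_antisymm
    · exact le_of_le_of_eq (Metric.infDist_le_dist_of_mem hpmem) hdistp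
    · refine le_of_not_gt fun h => ?_
      obtain ⟨y, hy, hylt⟩ := (Metric.infDist_lt_iff hne).mp h
      exact absurd hylt (not_lt.mpr (hlow y hy))
  -- sqrt algebra
  have hnv : ‖v‖ = Real.sqrt (Q/(N+1)) := by
    rw [← hnv2, Real.sqrt_sq (norm_nonneg v)]
  have key : Real.sqrt (N*(N+1)) * ‖v‖ = Real.sqrt (N*Q) := by
    rw [hnv, ← Real.sqrt_mul (by positivity)]
    congr 1
    field_simp
  have hsq : Real.sqrt (N*Q) ≤ Q := by
    calc Real.sqrt (N*Q) ≤ Real.sqrt (Q*Q) := Real.sqrt_le_sqrt (by nlinarith)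
      _ = Q := Real.sqrt_mul_self hQpos.le
  constructor
  · rw [hinf, le_div_iff₀ hnvpos]
    calc 1/2 * Real.sqrt (N*(N+1)) * ‖v‖ = 1/2 * (Real.sqrt (N*(N+1)) * ‖v‖) := by ring
      _ = 1/2 * Real.sqrt (N*Q) := by rw [key]
      _ ≤ Q/2 := by linarith
  · intro hcase
    have hQN : Q = N := by
      rcases hcase with h | h
      · have hK : K = 1 := by rw [hKdef]; exact_mod_cast h
        rw [hQdef, hK]; ring
      · have hK : K = N := by rw [hKdef, hNdef]; exact_mod_cast h
        rw [hQdef, hK]; ring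
    have hNN : Real.sqrt (N*Q) = Q := by
      rw [hQN, Real.sqrt_mul_self (by linarith)]
    rw [hinf, div_eq_iff hnvpos.ne']
    calc Q/2 = 1/2 * Real.sqrt (N*Q) := by rw [hNN]; ring
      _ = 1/2 * Real.sqrt (N*(N+1)) * ‖v‖ := by rw [← key]; ring
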